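/- Let σ > 0 and let αₙ(σ) and βₙ(σ) be differentiable in σ with α₀ ≡ 1, satisfying α'ₙ = αₙ₋₁ − K αₙ for n ≥ 1 (where K := (1/σ)[(1+θν₁)(α₀−α₁) + σ + θν₀]) and β'ₙ = β₁βₙ − βₙ₊₁ for n ≥ 1, with 0 < βₙ₊₁ < βₙ ≤ 1 and 0 ≤ αₙ₊₁ < αₙ and all series ∑αₙβₙ etc. absolutely convergent and termwise differentiable. Set A := ∑_{n≥1} αₙ₋₁βₙ and B := ∑_{n≥1} αₙβₙ. Then A' = (β₁−K)A + Kβ₁ and B' = (β₁−K)B + β₁, and hence d/dσ [θν₀ A/(A−B)] = θν₀ β₁ (A − KB)/(A−B)² = θν₀ β₁ (∑_{n≥1} α'ₙ βₙ)/(A−B)². -/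

import Mathlib

theorem stmt10 (σ θ ν₀ ν₁ : ℝ) (hσ : 0 < σ) (hθ : 0 < θ)
    (hν₀ : 0 < ν₀) (hν₁ : 0 < ν₁) (hν : ν₀ + ν₁ = 1)
    (α β : ℝ → ℕ → ℝ) (dα dβ : ℕ → ℝ) (K : ℝ)
    (hα0 : ∀ t, α t 0 = 1) (hdα0 : dα 0 = 0)
    (hK : K = (1/σ) * ((1 + θ*ν₁) * (α σ 0 - α σ 1) + σ + θ*ν₀))
    (hdα : ∀ n : ℕ, 1 ≤ n → dα n = α σ (n-1) - K * α σ n)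
    (hdβ : ∀ n : ℕ, 1 ≤ n → dβ n = β σ 1 * β σ n - β σ (n+1))
    (hβmono : ∀ n : ℕ, 0 < β σ (n+1) ∧ β σ (n+1) < β σ n ∧ β σ n ≤ 1)
    (hαmono : ∀ n : ℕ, 0 ≤ α σ (n+1) ∧ α σ (n+1) < α σ n)
    (hsumA : Summable (fun n : ℕ => α σ n * β σ (n+1)))
    (hsumB : Summable (fun n : ℕ => α σ (n+1) * β σ (n+1)))
    (hsumdA : Summable (fun n : ℕ => dα n * β σ (n+1) + α σ n * dβ (n+1)))
    (hsumdB : Summable (fun n : ℕ => dα (n+1) * β σ (n+1) + α σ (n+1) * dβ (n+1)))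
    (hsumd : Summable (fun n : ℕ => dα (n+1) * β σ (n+1)))
    (hA' : HasDerivAt (fun t => ∑' n : ℕ, α t n * β t (n+1))
      (∑' n : ℕ, (dα n * β σ (n+1) + α σ n * dβ (n+1))) σ)
    (hB' : HasDerivAt (fun t => ∑' n : ℕ, α t (n+1) * β t (n+1))
      (∑' n : ℕ, (dα (n+1) * β σ (n+1) + α σ (n+1) * dβ (n+1))) σ) :
    (∑' n : ℕ, (dα n * β σ (n+1) + α σ n * dβ (n+1)))
        = (β σ 1 - K) * (∑' n : ℕ, α σ n * β σ (n+1)) + K * β σ 1 ∧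
    (∑' n : ℕ, (dα (n+1) * β σ (n+1) + α σ (n+1) * dβ (n+1)))
        = (β σ 1 - K) * (∑' n : ℕ, α σ (n+1) * β σ (n+1)) + β σ 1 ∧
    HasDerivAt (fun t => θ*ν₀ * (∑' n : ℕ, α t n * β t (n+1))
        / ((∑' n : ℕ, α t n * β t (n+1)) - (∑' n : ℕ, α t (n+1) * β t (n+1))))
      (θ*ν₀ * β σ 1 * (∑' n : ℕ, dα (n+1) * β σ (n+1))
        / ((∑' n : ℕ, α σ n * β σ (n+1)) - (∑' n : ℕ, α σ (n+1) * β σ (n+1)))^2) σ ∧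
    θ*ν₀ * β σ 1 * (∑' n : ℕ, dα (n+1) * β σ (n+1))
        / ((∑' n : ℕ, α σ n * β σ (n+1)) - (∑' n : ℕ, α σ (n+1) * β σ (n+1)))^2
      = θ*ν₀ * β σ 1 * ((∑' n : ℕ, α σ n * β σ (n+1)) - K * (∑' n : ℕ, α σ (n+1) * β σ (n+1)))
        / ((∑' n : ℕ, α σ n * β σ (n+1)) - (∑' n : ℕ, α σ (n+1) * β σ (n+1)))^2 := by
  have hβpos : ∀ n, 0 < β σ n := by
    intro n
    cases n with
    | zero => exact lt_trans (hβmono 0).1 (hβmono 0).2.1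
    | succ m => exact (hβmono m).1
  have hαnn : ∀ n, 0 ≤ α σ n := by
    intro n
    cases n with
    | zero => rw [hα0]; norm_num
    | succ m => exact (hαmono m).1
  set A := ∑' n : ℕ, α σ n * β σ (n+1) with hAdef
  set B := ∑' n : ℕ, α σ (n+1) * β σ (n+1) with hBdef
  have S1 : Summable (fun n : ℕ => α σ n * β σ (n+2)) :=
    Summable.of_nonneg_of_le (fun n => mul_nonneg (hαnn n) (hβpos _).le)
      (fun n => mul_le_mul_of_nonneg_left ((hβmono (n+1)).2.1).le (hαnn n)) hsumA
  have S2 : Summable (fun n : ℕ => α σ (n+1) * β σ (n+2)) :=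
    Summable.of_nonneg_of_le (fun n => mul_nonneg (hαnn _) (hβpos _).le)
      (fun n => mul_le_mul_of_nonneg_left ((hβmono (n+1)).2.1).le (hαnn _)) hsumB
  -- shift of A
  have hT2 : ∑' n : ℕ, α σ (n+1) * β σ (n+2) = A - β σ 1 := by
    have h0 := Summable.tsum_eq_zero_add hsumA
    rw [hα0, one_mul] at h0
    have he : (fun n : ℕ => α σ (n+1) * β σ (n+1+1))
        = fun n : ℕ => α σ (n+1) * β σ (n+2) := rfl
    rw [he] at h0
    rw [hAdef, h0]
    norm_num
  -- dα term identities
  have hterm : ∀ n : ℕ, dα (n+1) * β σ (n+2)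
      = α σ n * β σ (n+2) - K * (α σ (n+1) * β σ (n+2)) := by
    intro n
    rw [hdα (n+1) (by omega)]
    simp only [Nat.add_sub_cancel]
    ring
  have hterm1 : ∀ n : ℕ, dα (n+1) * β σ (n+1)
      = α σ n * β σ (n+1) - K * (α σ (n+1) * β σ (n+1)) := by
    intro n
    rw [hdα (n+1) (by omega)]
    simp only [Nat.add_sub_cancel]
    ring
  have Sshift : Summable (fun n : ℕ => dα (n+1) * β σ (n+2)) :=
    ((S1.sub (S2.mul_left K)).congr (fun n => (hterm n).symm))
  have Sdα : Summable (fun n : ℕ => dα n * β σ (n+1)) :=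
    (summable_nat_add_iff 1).mp Sshift
  have Tshift : ∑' n : ℕ, dα (n+1) * β σ (n+2)
      = (∑' n : ℕ, α σ n * β σ (n+2)) - K * (A - β σ 1) := by
    rw [tsum_congr hterm, Summable.tsum_sub S1 (S2.mul_left K), tsum_mul_left, hT2]
  have Tdα : ∑' n : ℕ, dα n * β σ (n+1)
      = (∑' n : ℕ, α σ n * β σ (n+2)) - K * (A - β σ 1) := by
    rw [Summable.tsum_eq_zero_add Sdα, hdα0, zero_mul, zero_add]
    exact Tshift
  -- L : key sum for the numerator
  have hL : ∑' n : ℕ, dα (n+1) * β σ (n+1) = A - K * B := by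
    rw [tsum_congr hterm1, Summable.tsum_sub hsumA (hsumB.mul_left K), tsum_mul_left]
  -- first conjunct
  have hdβterm : ∀ n : ℕ, α σ n * dβ (n+1)
      = β σ 1 * (α σ n * β σ (n+1)) - α σ n * β σ (n+2) := by
    intro n
    rw [hdβ (n+1) (by omega)]
    ring
  have hdβterm' : ∀ n : ℕ, α σ (n+1) * dβ (n+1)
      = β σ 1 * (α σ (n+1) * β σ (n+1)) - α σ (n+1) * β σ (n+2) := by
    intro n
    rw [hdβ (n+1) (by omega)]
    ring
  have Sdβ : Summable (fun n : ℕ => α σ n * dβ (n+1)) :=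
    ((hsumA.mul_left (β σ 1)).sub S1).congr (fun n => (hdβterm n).symm)
  have Sdβ' : Summable (fun n : ℕ => α σ (n+1) * dβ (n+1)) :=
    ((hsumB.mul_left (β σ 1)).sub S2).congr (fun n => (hdβterm' n).symm)
  have c1 : (∑' n : ℕ, (dα n * β σ (n+1) + α σ n * dβ (n+1)))
      = (β σ 1 - K) * A + K * β σ 1 := by
    rw [Summable.tsum_add Sdα Sdβ, Tdα, tsum_congr hdβterm,
      Summable.tsum_sub (hsumA.mul_left (β σ 1)) S1, tsum_mul_left]
    ring
  have c2 : (∑' n : ℕ, (dα (n+1) * β σ (n+1) + α σ (n+1) * dβ (n+1)))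
      = (β σ 1 - K) * B + β σ 1 := by
    rw [Summable.tsum_add hsumd Sdβ', hL, tsum_congr hdβterm',
      Summable.tsum_sub (hsumB.mul_left (β σ 1)) S2, tsum_mul_left, hT2]
    ring
  -- positivity of A - B
  have hABpos : 0 < A - B := by
    rw [hAdef, hBdef, ← Summable.tsum_sub hsumA hsumB]
    apply Summable.tsum_pos (hsumA.sub hsumB) _ 0
    · have := (hαmono 0).2
      have h1 := hβpos 1
      nlinarith
    · intro n
      have := (hαmono n).2
      have h1 := hβpos (n+1)
      nlinarith
  have hne : A - B ≠ 0 := ne_of_gt hABpos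
  refine ⟨c1, c2, ?_, ?_⟩
  · have hD := (hA'.const_mul (θ*ν₀)).div (hA'.sub hB') hne
    convert hD using 1
    · rfl
    · rfl
    · rfl
    rw [c1, c2, hL]
    rw [div_eq_div_iff (by positivity) (by positivity)]
    simp only [Pi.sub_apply, ← hAdef, ← hBdef]
    ring
  · rw [hL]
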